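/- Let A be a one-clock priced timed automaton with a single cost function and all discrete costs 0, and let (q,x) be a state of A. Then (q,x) ⊨ AφU_{=c}ψ if and only if (q,x) ⊨ AφU_{≥c}ψ and (q,x) ⊨ AF_{=c}ψ, where AF_{∼c}θ denotes A(⊤U_{∼c}θ). -/
import Mathlib


/-! ## One-clock priced timed automata: common definitions -/

/-- Comparison operators used in clock constraints and cost constraints. -/
inductive Cmp
  | lt | le | eq | ge | gt
  deriving DecidableEq

/-- Satisfaction of `x ∼ c`. -/
def Cmp.sat : Cmp → ℝ → ℝ → Prop
  | .lt, x, c => x < c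
  | .le, x, c => x ≤ c
  | .eq, x, c => x = c
  | .ge, x, c => c ≤ x
  | .gt, x, c => c < x

/-- A guard (clock constraint) is a finite conjunction of constraints `x ∼ c`, `c ∈ ℕ`. -/
abbrev PGuard := List (Cmp × ℕ)

/-- A clock value satisfies a guard if it satisfies all its atomic constraints. -/
def PGuard.sat (g : PGuard) (x : ℝ) : Prop := ∀ p ∈ g, Cmp.sat p.1 x (p.2 : ℝ)

/-- A transition of a one-clock priced timed automaton: source, guard, reset set
(`reset = true` iff the clock is reset), target, and discrete cost. -/
structure PTrans (Q : Type) where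
  src : Q
  guard : PGuard
  reset : Bool
  tgt : Q
  dcost : ℕ

/-- A one-clock priced timed automaton with a single cost function:
a finite set `Q` of locations, an initial location, a finite set of transitions,
invariants, and a cost rate for each location (discrete costs are on transitions). -/
structure PTA (Q : Type) [Fintype Q] where
  init : Q
  E : Set (PTrans Q)
  finE : E.Finite
  Inv : Q → PGuard
  rate : Q → ℕ

variable {Q : Type} [Fintype Q]

/-- A delay move `(q,v) → (q,v+t)` of cost `t · rate q`, allowed if the invariant
holds throughout. -/
def DelayMove (A : PTA Q) (s : Q × ℝ) (c : ℝ) (s' : Q × ℝ) : Prop :=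
  ∃ t : ℝ, 0 ≤ t ∧ s' = (s.1, s.2 + t) ∧ c = t * (A.rate s.1 : ℝ) ∧
    ∀ t' : ℝ, 0 ≤ t' → t' ≤ t → PGuard.sat (A.Inv s.1) (s.2 + t')

/-- A discrete move via a transition of `A`, of cost the discrete cost of the transition. -/
def DiscMove (A : PTA Q) (s : Q × ℝ) (c : ℝ) (s' : Q × ℝ) : Prop :=
  ∃ e ∈ A.E, e.src = s.1 ∧ e.tgt = s'.1 ∧ PGuard.sat e.guard s.2 ∧
    s'.2 = (if e.reset then 0 else s.2) ∧ PGuard.sat (A.Inv e.tgt) s'.2 ∧ c = (e.dcost : ℝ)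

/-- A simple move of the timed transition system `TTS_A`. -/
def PMove (A : PTA Q) (s : Q × ℝ) (c : ℝ) (s' : Q × ℝ) : Prop :=
  DelayMove A s c s' ∨ DiscMove A s c s'

/-- `PPath A s c s'`: there is a path (finite sequence of simple moves) in `TTS_A`
from `s` to `s'` of total cost `c`. -/
inductive PPath (A : PTA Q) : (Q × ℝ) → ℝ → (Q × ℝ) → Prop
  | refl (s : Q × ℝ) : PPath A s 0 s
  | step {s s' s'' : Q × ℝ} {c c' : ℝ} :
      PMove A s c s' → PPath A s' c' s'' → PPath A s (c + c') s''

/-- Reachability in `TTS_A` (notation `⇝*` in the paper). -/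
def PReach (A : PTA Q) (s s' : Q × ℝ) : Prop := ∃ c : ℝ, PPath A s c s'

/-- A mixed move: a delay move followed by a discrete move. -/
def MixedMove (A : PTA Q) (s : Q × ℝ) (c : ℝ) (s' : Q × ℝ) : Prop :=
  ∃ (c₁ c₂ : ℝ) (m : Q × ℝ), DelayMove A s c₁ m ∧ DiscMove A m c₂ s' ∧ c = c₁ + c₂

/-- A priced timed automaton is non-blocking. -/
def NonBlocking (A : PTA Q) : Prop :=
  ∀ (q : Q) (v : ℝ), 0 ≤ v → ∃ (c : ℝ) (s' : Q × ℝ), MixedMove A (q, v) c s'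

/-- The constants appearing in the clock constraints (guards and invariants) of `A`. -/
def PTA.consts (A : PTA Q) : Set ℕ :=
  {c | (∃ e ∈ A.E, ∃ p ∈ e.guard, p.2 = c) ∨ ∃ q : Q, ∃ p ∈ A.Inv q, p.2 = c}

/-- The lcm of all positive cost rates labeling a location of `A`. -/
def posLcm (A : PTA Q) : ℕ :=
  Finset.lcm (Finset.univ.filter fun q => 0 < A.rate q) A.rate

/-! ## WCTL: syntax and semantics -/

/-- Syntax of WCTL over atomic propositions `AP` (with a trivially true formula `tt`). -/
inductive WCTL (AP : Type)
  | tt : WCTL AP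
  | atom : AP → WCTL AP
  | not : WCTL AP → WCTL AP
  | or : WCTL AP → WCTL AP → WCTL AP
  | EU : WCTL AP → Cmp → ℕ → WCTL AP → WCTL AP
  | AU : WCTL AP → Cmp → ℕ → WCTL AP → WCTL AP

/-- An infinite run of `A` from `s₀`: an infinite sequence of mixed moves,
`cst n` being the cost of the `n`-th mixed move. -/
structure InfRun (A : PTA Q) (s₀ : Q × ℝ) where
  st : ℕ → Q × ℝ
  cst : ℕ → ℝ
  first : st 0 = s₀
  step : ∀ n : ℕ, MixedMove A (st n) (cst n) (st (n + 1))

/-- Satisfaction of WCTL formulas over states of a labeled one-clock priced timed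
automaton (`L` is the labeling function). -/
def WCTLsat {AP : Type} (A : PTA Q) (L : Q → AP → Prop) : WCTL AP → (Q × ℝ) → Prop
  | .tt, _ => True
  | .atom a, s => L s.1 a
  | .not φ, s => ¬ WCTLsat A L φ s
  | .or φ ψ, s => WCTLsat A L φ s ∨ WCTLsat A L ψ s
  | .EU φ cmp c ψ, s => ∃ ρ : InfRun A s, ∃ π : ℕ, 0 < π ∧ WCTLsat A L ψ (ρ.st π) ∧
      (∀ π' : ℕ, 0 < π' → π' < π → WCTLsat A L φ (ρ.st π')) ∧
      Cmp.sat cmp (∑ i ∈ Finset.range π, ρ.cst i) (c : ℝ)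
  | .AU φ cmp c ψ, s => ∀ ρ : InfRun A s, ∃ π : ℕ, 0 < π ∧ WCTLsat A L ψ (ρ.st π) ∧
      (∀ π' : ℕ, 0 < π' → π' < π → WCTLsat A L φ (ρ.st π')) ∧
      Cmp.sat cmp (∑ i ∈ Finset.range π, ρ.cst i) (c : ℝ)

/-- A cost constraint `∼ c` is trivial iff it is `≥ 0`. -/
def isTrivialC : Cmp → ℕ → Bool
  | .ge, 0 => true
  | _, _ => false

/-- The constrained temporal height of a WCTL formula: the maximal number of nested
constrained modalities (modalities whose constraint is not equivalent to `≥ 0`). -/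
def cheight {AP : Type} : WCTL AP → ℕ
  | .tt => 0
  | .atom _ => 0
  | .not φ => cheight φ
  | .or φ ψ => max (cheight φ) (cheight ψ)
  | .EU φ cmp c ψ => max (cheight φ) (cheight ψ) + (if isTrivialC cmp c then 0 else 1)
  | .AU φ cmp c ψ => max (cheight φ) (cheight ψ) + (if isTrivialC cmp c then 0 else 1)

/-- Each mixed-move cost along an infinite run is nonnegative. -/
lemma InfRun.cst_nonneg {Q : Type} [Fintype Q] {A : PTA Q} {s : Q × ℝ}
    (ρ : InfRun A s) (n : ℕ) : 0 ≤ ρ.cst n := by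
  obtain ⟨c₁, c₂, m, hd, hdm, hc⟩ := ρ.step n
  obtain ⟨t, ht, _, hc₁, _⟩ := hd
  obtain ⟨e, _, _, _, _, _, _, hc₂⟩ := hdm
  rw [hc, hc₁, hc₂]
  positivity

/-- For a one-clock PTA with a single cost function and all discrete costs 0,
`(q,x) ⊨ AφU_{=c}ψ` iff `(q,x) ⊨ AφU_{≥c}ψ` and `(q,x) ⊨ AF_{=c}ψ`. -/
theorem stmt9 {Q AP : Type} [Fintype Q] (A : PTA Q) (L : Q → AP → Prop)
    (hnb : NonBlocking A) (hdisc : ∀ e ∈ A.E, e.dcost = 0)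
    (φ ψ : WCTL AP) (c : ℕ) (q : Q) (x : ℝ) (hx : 0 ≤ x) :
    WCTLsat A L (.AU φ .eq c ψ) (q, x) ↔
      (WCTLsat A L (.AU φ .ge c ψ) (q, x) ∧
       WCTLsat A L (.AU .tt .eq c ψ) (q, x)) := by
  constructor
  · intro h
    refine ⟨fun ρ => ?_, fun ρ => ?_⟩
    · obtain ⟨π, hπ, hψ, hφ, hsum⟩ := h ρ
      exact ⟨π, hπ, hψ, hφ, le_of_eq hsum.symm⟩
    · obtain ⟨π, hπ, hψ, hφ, hsum⟩ := h ρ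
      exact ⟨π, hπ, hψ, fun _ _ _ => trivial, hsum⟩
  · rintro ⟨h1, h2⟩ ρ
    obtain ⟨π₁, hπ₁, hψ₁, hφ₁, hge⟩ := h1 ρ
    obtain ⟨π₂, hπ₂, hψ₂, -, heq⟩ := h2 ρ
    by_cases hle : π₂ ≤ π₁
    · exact ⟨π₂, hπ₂, hψ₂, fun π' h0 hlt => hφ₁ π' h0 (lt_of_lt_of_le hlt hle), heq⟩
    · push_neg at hle
      have hmono : ∑ i ∈ Finset.range π₁, ρ.cst i ≤ ∑ i ∈ Finset.range π₂, ρ.cst i :=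
        Finset.sum_le_sum_of_subset_of_nonneg (Finset.range_subset_range.mpr hle.le)
          (fun i _ _ => ρ.cst_nonneg i)
      have hsum : ∑ i ∈ Finset.range π₁, ρ.cst i = c :=
        le_antisymm (heq ▸ hmono) hge
      exact ⟨π₁, hπ₁, hψ₁, hφ₁, hsum⟩
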